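/- Let 0 < a < 1 and let b be a natural number with a·b ≥ 1. The Weierstrass function w_{a,b}(x) = ∑_{n=0}^∞ aⁿ cos(bⁿ π x) is nowhere differentiable: for every x ∈ ℝ, w_{a,b} is not differentiable at x. -/

import Mathlib

set_option maxHeartbeats 1000000
open Real MeasureTheory FourierTransform Filter Complex SchwartzMap

noncomputable section
namespace WNDaux

def bump : ContDiffBump (0:ℝ) := ⟨1/16, 1/8, by norm_num, by norm_num⟩

def psi : SchwartzMap ℝ ℂ where
  toFun x := (bump x : ℂ)
  smooth' := Complex.ofRealCLM.contDiff.comp bump.contDiff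
  decay' := by
    intro k n
    have hcs : HasCompactSupport (fun x : ℝ => (bump x : ℂ)) :=
      bump.hasCompactSupport.comp_left (g := fun r : ℝ => (r:ℂ)) (by simp)
    have h1 : Continuous fun x : ℝ => ‖x‖ ^ k * ‖iteratedFDeriv ℝ n (fun x : ℝ => (bump x : ℂ)) x‖ := by
      refine (continuous_norm.pow k).mul ?_
      exact ((Complex.ofRealCLM.contDiff.comp bump.contDiff).continuous_iteratedFDeriv
        (by exact_mod_cast le_top)).norm
    have h2 : HasCompactSupport fun x : ℝ =>
        ‖x‖ ^ k * ‖iteratedFDeriv ℝ n (fun x : ℝ => (bump x : ℂ)) x‖ :=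
      ((hcs.iteratedFDeriv n).norm).mul_left
    obtain ⟨C, hC⟩ := h1.bounded_above_of_compact_support h2
    exact ⟨C, fun x => le_trans (by simp) (hC x)⟩

lemma psi_apply (x : ℝ) : psi x = (bump x : ℂ) := rfl

lemma psi_zero : psi 0 = 1 := by
  rw [psi_apply]
  norm_cast
  exact bump.one_of_mem_closedBall (by simp [bump])

lemma psi_supp : ∀ x : ℝ, 1/8 ≤ |x| → psi x = 0 := by
  intro x hx
  rw [psi_apply]
  norm_cast
  apply bump.zero_of_le_dist
  simpa [bump, Real.dist_eq] using hx

def phi : SchwartzMap ℝ ℂ := SchwartzMap.fourierTransformCLM ℂ psi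

lemma fourier_phi (w : ℝ) : 𝓕 (⇑phi) w = psi (-w) := by
  have hint : Integrable (𝓕 (psi : ℝ → ℂ)) := by
    have : (𝓕 (psi : ℝ → ℂ)) = fun t => phi t := by
      ext t; rw [phi, SchwartzMap.fourierTransformCLM_apply]; rfl
    rw [this]
    exact phi.integrable
  have h1 : 𝓕⁻ (𝓕 (psi : ℝ → ℂ)) = psi :=
    Continuous.fourierInv_fourier_eq psi.continuous psi.integrable hint
  have h2 : 𝓕 (⇑phi) w = 𝓕 (𝓕 (psi : ℝ → ℂ)) w := by
    have : (⇑phi : ℝ → ℂ) = 𝓕 (psi : ℝ → ℂ) := by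
      ext t; rw [phi, SchwartzMap.fourierTransformCLM_apply]; rfl
    rw [this]
  have h3 := Real.fourierInv_eq_fourier_neg (𝓕 (psi : ℝ → ℂ)) (-w)
  rw [neg_neg] at h3
  rw [h2, ← h3, h1]

lemma key (c : ℝ) :
    ∫ s : ℝ, Complex.exp ((c * s : ℝ) * Complex.I) * phi s = psi (c / (2 * π)) := by
  have := fourier_phi (-(c / (2 * π)))
  rw [Real.fourier_eq', neg_neg] at this
  rw [← this]
  congr 1
  ext v
  rw [smul_eq_mul]
  congr 2
  have hinner : (inner ℝ v (-(c / (2 * π))) : ℝ) = v * (-(c / (2 * π))) := by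
    simp [RCLike.inner_apply]; ring
  rw [hinner]
  push_cast
  have hπ : (π:ℂ) ≠ 0 := Complex.ofReal_ne_zero.mpr Real.pi_ne_zero
  field_simp

lemma integrable_exp_mul (c : ℝ) :
    Integrable (fun s : ℝ => Complex.exp ((c * s : ℝ) * Complex.I) * phi s) := by
  refine phi.integrable.bdd_mul ?_ (Filter.Eventually.of_forall fun s => by rw [Complex.norm_exp_ofReal_mul_I])
  exact (Complex.continuous_exp.comp
    ((Complex.continuous_ofReal.comp (continuous_const.mul continuous_id)).mul
      continuous_const)).aestronglyMeasurable

lemma integrable_smul_phi : Integrable (fun x : ℝ => x • (phi x)) := by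
  have h1 := phi.integrable_pow_mul (μ := volume) 1
  refine h1.mono' ?_ ?_
  · exact ((Complex.continuous_ofReal.comp continuous_id).smul phi.continuous).aestronglyMeasurable
  · filter_upwards with x
    simp [norm_smul]

lemma keyD : ∫ s : ℝ, (s : ℂ) * Complex.exp ((-π * s : ℝ) * Complex.I) * phi s = 0 := by
  have hD := Real.hasDerivAt_fourier phi.integrable integrable_smul_phi (1/2)
  have h0 : HasDerivAt (𝓕 (⇑phi)) 0 (1/2 : ℝ) := by
    have hEq : 𝓕 (⇑phi) =ᶠ[nhds (1/2 : ℝ)] (fun _ : ℝ => (0:ℂ)) := by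
      have : Metric.ball (1/2 : ℝ) (1/8) ∈ nhds (1/2 : ℝ) :=
        Metric.ball_mem_nhds _ (by norm_num)
      filter_upwards [this] with w hw
      rw [fourier_phi w]
      rw [psi_supp]
      rw [abs_neg]
      have h1 : (1/2 : ℝ) - 1/8 ≤ |w| := by
        have := abs_sub_abs_le_abs_sub (1/2 : ℝ) w
        rw [Metric.mem_ball, Real.dist_eq] at hw
        rw [abs_sub_comm] at hw
        simp only [abs_of_pos (by norm_num : (0:ℝ) < 1/2)] at this
        linarith [this.trans hw.le]
      linarith
    exact (hasDerivAt_const _ (0:ℂ)).congr_of_eventuallyEq hEq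
  have huniq := hD.unique h0
  have hexpand : 𝓕 (fun x : ℝ => (-2 * ↑π * I * ↑x) • phi x) (1/2)
      = (-2 * ↑π * I) * ∫ s : ℝ, (s : ℂ) * Complex.exp ((-π * s : ℝ) * Complex.I) * phi s := by
    rw [Real.fourier_eq']
    rw [← MeasureTheory.integral_const_mul]
    congr 1
    ext v
    have hinner : (inner ℝ v (1/2 : ℝ) : ℝ) = v * (1/2) := by simp [RCLike.inner_apply]; ring
    rw [smul_eq_mul, hinner]
    have : (-2 * π * (v * (1/2)) : ℝ) = -π * v := by ring
    rw [this]
    simp only [smul_eq_mul]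
    ring
  rw [huniq] at hexpand
  have hne : (-2 * (π:ℂ) * I) ≠ 0 := by
    simp [Complex.ofReal_ne_zero.mpr Real.pi_ne_zero, Complex.I_ne_zero]
  rcases mul_eq_zero.mp hexpand.symm with h | h
  · exact absurd h hne
  · exact h

lemma hcos (u : ℝ) :
    ((Real.cos u : ℝ) : ℂ) = (Complex.exp (↑u * I) + Complex.exp (-↑u * I)) / 2 := by
  rw [Complex.ofReal_cos]
  rfl

lemma termEval (B : ℝ) (hB : 2 ≤ B) (a x : ℝ) (ha0 : 0 < a) (m n : ℕ) :
    ∫ s : ℝ, ((a ^ n * Real.cos (B ^ n * π * (x + s / B ^ m)) : ℝ) : ℂ) *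
        (Complex.exp ((-π * s : ℝ) * Complex.I) * phi s)
      = if n = m then ((a ^ m : ℝ) : ℂ) / 2 * Complex.exp ((B ^ m * π * x : ℝ) * Complex.I)
        else 0 := by
  have hψ0 := psi_zero
  have hsupp := psi_supp
  have hB0 : (0:ℝ) < B := lt_of_lt_of_le two_pos hB
  have hBm : (0:ℝ) < B ^ m := pow_pos hB0 m
  have hBn : (0:ℝ) < B ^ n := pow_pos hB0 n
  set c : ℝ := B ^ n * π / B ^ m with hc_def
  set θ : ℝ := B ^ n * π * x with hθ_def
  have hc0 : 0 < c := by positivity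
  have hpt : ∀ s : ℝ, ((a ^ n * Real.cos (B ^ n * π * (x + s / B ^ m)) : ℝ) : ℂ) *
        (Complex.exp ((-π * s : ℝ) * Complex.I) * phi s)
      = ((a ^ n / 2 : ℝ) : ℂ) *
          (Complex.exp ((θ : ℝ) * I) * (Complex.exp ((((c - π) * s : ℝ)) * I) * phi s))
        + ((a ^ n / 2 : ℝ) : ℂ) *
          (Complex.exp (((-θ : ℝ) : ℂ) * I) *
            (Complex.exp ((((-c - π) * s : ℝ)) * I) * phi s)) := by
    intro s
    rw [show B ^ n * π * (x + s / B ^ m) = θ + c * s by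
      rw [hθ_def, hc_def]; field_simp]
    rw [Complex.ofReal_mul, hcos (θ + c * s)]
    have e1 : Complex.exp ((↑(θ + c * s)) * I) =
        Complex.exp ((θ:ℝ) * I) * Complex.exp ((↑(c * s)) * I) := by
      rw [← Complex.exp_add]; congr 1; push_cast; ring
    have e2 : Complex.exp (-(↑(θ + c * s)) * I) =
        Complex.exp (((-θ : ℝ) : ℂ) * I) * Complex.exp ((↑(-(c * s))) * I) := by
      rw [← Complex.exp_add]; congr 1; push_cast; ring
    have e3 : Complex.exp ((((c - π) * s : ℝ)) * I) =
        Complex.exp ((↑(c * s)) * I) * Complex.exp ((-π * s : ℝ) * Complex.I) := by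
      rw [← Complex.exp_add]; congr 1; push_cast; ring
    have e4 : Complex.exp ((((-c - π) * s : ℝ)) * I) =
        Complex.exp ((↑(-(c * s))) * I) * Complex.exp ((-π * s : ℝ) * Complex.I) := by
      rw [← Complex.exp_add]; congr 1; push_cast; ring
    rw [e1, e2, e3, e4]
    push_cast
    ring
  rw [MeasureTheory.integral_congr_ae (Filter.Eventually.of_forall hpt)]
  rw [MeasureTheory.integral_add
    (((integrable_exp_mul (c - π)).const_mul _).const_mul _)
    (((integrable_exp_mul (-c - π)).const_mul _).const_mul _)]
  simp only [MeasureTheory.integral_const_mul]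
  rw [key (c - π), key (-c - π)]
  by_cases hnm : n = m
  · subst hnm
    have hc : c = π := by rw [hc_def]; field_simp
    rw [hc]
    have h1 : (π - π) / (2 * π) = (0:ℝ) := by simp
    have h2 : (-π - π) / (2 * π) = (-1:ℝ) := by
      field_simp; ring
    rw [h1, h2, hψ0, hsupp (-1) (by norm_num)]
    simp only [hθ_def]
    push_cast
    ring
  · rw [if_neg hnm]
    have harg2 : psi ((-c - π) / (2 * π)) = 0 := by
      apply hsupp
      rw [abs_div, abs_of_pos (by positivity : (0:ℝ) < 2 * π),
        abs_of_nonpos (by nlinarith [Real.pi_pos] : -c - π ≤ 0)]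
      rw [le_div_iff₀ (by positivity)]
      nlinarith [Real.pi_pos]
    have harg1 : psi ((c - π) / (2 * π)) = 0 := by
      apply hsupp
      rcases lt_or_gt_of_ne hnm with h | h
      · have hpow : B ^ (n + 1) ≤ B ^ m := pow_le_pow_right₀ (by linarith) h
        have h2c : 2 * B ^ n ≤ B ^ m := by
          calc 2 * B ^ n ≤ B * B ^ n := by nlinarith
          _ = B ^ (n+1) := by ring
          _ ≤ B ^ m := hpow
        have hcle : c ≤ π / 2 := by
          rw [hc_def, div_le_iff₀ hBm]
          nlinarith [Real.pi_pos]
        rw [abs_div, abs_of_pos (by positivity : (0:ℝ) < 2 * π),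
          abs_of_nonpos (by nlinarith [Real.pi_pos] : c - π ≤ 0)]
        rw [le_div_iff₀ (by positivity)]
        nlinarith [Real.pi_pos]
      · have hpow : B ^ (m + 1) ≤ B ^ n := pow_le_pow_right₀ (by linarith) h
        have h2c : 2 * B ^ m ≤ B ^ n := by
          calc 2 * B ^ m ≤ B * B ^ m := by nlinarith
          _ = B ^ (m+1) := by ring
          _ ≤ B ^ n := hpow
        have hcge : 2 * π ≤ c := by
          rw [hc_def, le_div_iff₀ hBm]
          nlinarith [Real.pi_pos]
        rw [abs_div, abs_of_pos (by positivity : (0:ℝ) < 2 * π),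
          _root_.abs_of_nonneg (by nlinarith [Real.pi_pos] : (0:ℝ) ≤ c - π)]
        rw [le_div_iff₀ (by positivity)]
        nlinarith [Real.pi_pos]
    rw [harg1, harg2]
    simp

lemma sumEval {a : ℝ} (ha0 : 0 < a) (ha1 : a < 1) (B : ℝ) (hB : 2 ≤ B) (x : ℝ) (m : ℕ) :
    ∫ s : ℝ, (((∑' n : ℕ, a ^ n * Real.cos (B ^ n * π * (x + s / B ^ m))) : ℝ) : ℂ) *
        (Complex.exp ((-π * s : ℝ) * Complex.I) * phi s)
      = ((a ^ m : ℝ) : ℂ) / 2 * Complex.exp ((B ^ m * π * x : ℝ) * Complex.I) := by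
  set E : ℝ → ℂ := fun s => Complex.exp ((-π * s : ℝ) * Complex.I) with hE_def
  set F : ℕ → ℝ → ℂ := fun n s =>
    ((a ^ n * Real.cos (B ^ n * π * (x + s / B ^ m)) : ℝ) : ℂ) * (E s * phi s) with hF_def
  have hEnorm : ∀ s, ‖E s‖ = 1 := fun s => Complex.norm_exp_ofReal_mul_I _
  have habs : ∀ (n : ℕ) (u : ℝ), |a ^ n| * ‖Real.cos u‖ ≤ a ^ n := by
    intro n u
    rw [_root_.abs_pow, abs_of_pos ha0, Real.norm_eq_abs]
    nlinarith [abs_cos_le_one u, pow_pos ha0 n, abs_nonneg (Real.cos u)]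
  have hcontE : Continuous E := by
    rw [hE_def]
    exact Complex.continuous_exp.comp
      ((Complex.continuous_ofReal.comp (continuous_const.mul continuous_id)).mul continuous_const)
  have hcontC : ∀ n : ℕ, Continuous fun s : ℝ =>
      ((a ^ n * Real.cos (B ^ n * π * (x + s / B ^ m)) : ℝ) : ℂ) := by
    intro n
    exact Complex.continuous_ofReal.comp (continuous_const.mul (Real.continuous_cos.comp
      (continuous_const.mul (continuous_const.add (continuous_id.div_const _)))))
  have hFnorm : ∀ n s, ‖F n s‖ ≤ a ^ n * ‖phi s‖ := by
    intro n s
    rw [hF_def]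
    simp only [norm_mul, Complex.norm_real, hEnorm, one_mul, Real.norm_eq_abs, abs_mul]
    gcongr
    exact habs n _
  have hF_int : ∀ n, Integrable (F n) := by
    intro n
    have : Integrable (fun s =>
        (((a ^ n * Real.cos (B ^ n * π * (x + s / B ^ m)) : ℝ) : ℂ) * E s) * phi s) := by
      refine phi.integrable.bdd_mul (c := a ^ n) ?_ (Filter.Eventually.of_forall fun s => ?_)
      · exact ((hcontC n).mul hcontE).aestronglyMeasurable
      · rw [norm_mul, hEnorm, mul_one, Complex.norm_real, Real.norm_eq_abs, abs_mul]
        exact habs n _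
    refine this.congr (Filter.Eventually.of_forall fun s => ?_)
    rw [hF_def]; ring
  have hstep1 : ∀ s : ℝ, (((∑' n : ℕ, a ^ n * Real.cos (B ^ n * π * (x + s / B ^ m))) : ℝ) : ℂ) *
      (E s * phi s) = ∑' n, F n s := by
    intro s
    rw [Complex.ofReal_tsum]
    rw [tsum_mul_right]
  rw [MeasureTheory.integral_congr_ae (Filter.Eventually.of_forall hstep1)]
  rw [← MeasureTheory.integral_tsum_of_summable_integral_norm hF_int ?hsum]
  case hsum =>
    apply Summable.of_nonneg_of_le (fun n => integral_nonneg fun s => norm_nonneg _)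
      (fun n => ?_) (((summable_geometric_of_lt_one ha0.le ha1)).mul_right
        (∫ s, ‖phi s‖))
    calc ∫ s, ‖F n s‖ ≤ ∫ s, a ^ n * ‖phi s‖ :=
          integral_mono (hF_int n).norm (phi.integrable.norm.const_mul _)
            fun s => hFnorm n s
    _ = a ^ n * ∫ s, ‖phi s‖ := integral_const_mul _ _
  have hterm : ∀ n, ∫ s, F n s
      = if n = m then ((a ^ m : ℝ) : ℂ) / 2 * Complex.exp ((B ^ m * π * x : ℝ) * Complex.I)
        else 0 := fun n => termEval B hB a x ha0 m n
  rw [tsum_congr hterm, tsum_eq_single m (fun n hn => by rw [if_neg hn]), if_pos rfl]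

end WNDaux
end

open Real

/-- The Weierstrass function `w_{a,b}(x) = ∑ₙ aⁿ cos(bⁿ π x)`. -/
noncomputable def weierstrassFun (a : ℝ) (b : ℕ) (x : ℝ) : ℝ :=
  ∑' n : ℕ, a ^ n * Real.cos ((b : ℝ) ^ n * π * x)

open MeasureTheory Filter FourierTransform WNDaux

/-- For `0 < a < 1` and `b : ℕ` with `a * b ≥ 1`, the Weierstrass function
is nowhere differentiable. -/
theorem weierstrassFun_nowhere_differentiable
    (a : ℝ) (b : ℕ) (ha0 : 0 < a) (ha1 : a < 1) (hab : 1 ≤ a * b) (x : ℝ) :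
    ¬ DifferentiableAt ℝ (weierstrassFun a b) x := by
  intro hf
  have hbR0 : (0:ℝ) ≤ (b:ℝ) := Nat.cast_nonneg b
  have hBgt1 : (1:ℝ) < (b:ℝ) := by nlinarith
  have hB : (2:ℝ) ≤ (b:ℝ) := by
    have h1 : 1 < b := by exact_mod_cast hBgt1
    exact_mod_cast h1
  have hB0 : (0:ℝ) < (b:ℝ) := by linarith
  have hBm : ∀ m : ℕ, (0:ℝ) < (b:ℝ) ^ m := fun m => pow_pos hB0 m
  set f : ℝ → ℝ := weierstrassFun a b with hf_def
  have hMpos : (0:ℝ) < (1 - a)⁻¹ := inv_pos.mpr (by linarith)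
  have habs : ∀ (n : ℕ) (u : ℝ), |a ^ n * Real.cos u| ≤ a ^ n := by
    intro n u
    rw [abs_mul, _root_.abs_pow, abs_of_pos ha0]
    nlinarith [abs_cos_le_one u, pow_pos ha0 n, abs_nonneg (Real.cos u)]
  have hgeo : Summable (fun n : ℕ => a ^ n) := summable_geometric_of_lt_one ha0.le ha1
  have hsummable : ∀ y : ℝ, Summable (fun n : ℕ => a ^ n * Real.cos ((b:ℝ) ^ n * π * y)) := by
    intro y
    exact Summable.of_norm_bounded hgeo fun n => by
      rw [Real.norm_eq_abs]; exact habs n _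
  have hM : ∀ y : ℝ, |f y| ≤ (1 - a)⁻¹ := by
    intro y
    rw [hf_def, weierstrassFun]
    calc |∑' n : ℕ, a ^ n * Real.cos ((b:ℝ) ^ n * π * y)|
        ≤ ∑' n : ℕ, a ^ n := by
          have := norm_tsum_le_tsum_norm (f := fun n : ℕ => a ^ n * Real.cos ((b:ℝ) ^ n * π * y))
            (Summable.of_nonneg_of_le (fun n => norm_nonneg _)
              (fun n => by rw [Real.norm_eq_abs]; exact habs n _) hgeo)
          rw [Real.norm_eq_abs] at this
          refine this.trans (Summable.tsum_le_tsum (fun n => by rw [Real.norm_eq_abs]; exact habs n _)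
            (Summable.of_nonneg_of_le (fun n => norm_nonneg _)
              (fun n => by rw [Real.norm_eq_abs]; exact habs n _) hgeo) hgeo)
    _ = (1 - a)⁻¹ := tsum_geometric_of_lt_one ha0.le ha1
  have hfc : Continuous f := by
    rw [hf_def]
    apply continuous_tsum (u := fun n : ℕ => a ^ n)
    · intro n
      exact continuous_const.mul (Real.continuous_cos.comp (by
        exact (continuous_const.mul continuous_id)))
    · exact hgeo
    · intro n y
      rw [Real.norm_eq_abs]; exact habs n _
  set L : ℝ := deriv f x with hL_def
  have hder : HasDerivAt f L x := hf.hasDerivAt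
  set r : ℝ → ℝ := fun t => f (x + t) - f x - t * L with hr_def
  have hr0 : r 0 = 0 := by rw [hr_def]; simp
  have hlo : (fun t : ℝ => r t) =o[nhds (0:ℝ)] (fun t : ℝ => t) := by
    have h := hasDerivAt_iff_isLittleO_nhds_zero.mp hder
    simpa [hr_def, smul_eq_mul, mul_comm] using h
  obtain ⟨δ, hδ0, hδ⟩ : ∃ δ > 0, ∀ t : ℝ, |t| < δ → |r t| ≤ |t| := by
    have h1 := hlo.def one_pos
    rw [Metric.eventually_nhds_iff] at h1
    obtain ⟨δ, hδ0, h⟩ := h1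
    refine ⟨δ, hδ0, fun t ht => ?_⟩
    have := h (y := t) (by simpa [Real.dist_eq] using ht)
    simpa using this
  set C : ℝ := 2 * (1 - a)⁻¹ / δ + |L| + 1 with hC_def
  have hCpos : 0 < C := by positivity
  have hC : ∀ t : ℝ, |r t| ≤ C * |t| := by
    intro t
    by_cases ht : |t| < δ
    · have h1 := hδ t ht
      have h2 : (1:ℝ) ≤ C := by
        rw [hC_def]
        have : 0 ≤ 2 * (1 - a)⁻¹ / δ := by positivity
        nlinarith [abs_nonneg L]
      nlinarith [abs_nonneg t]
    · push_neg at ht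
      have h1 : |r t| ≤ 2 * (1 - a)⁻¹ + |L| * |t| := by
        rw [hr_def]
        calc |f (x + t) - f x - t * L| ≤ |f (x + t) - f x| + |t * L| := abs_sub _ _
        _ ≤ |f (x + t)| + |f x| + |t| * |L| := by
            rw [abs_mul]
            nlinarith [abs_sub (f (x + t)) (f x)]
        _ ≤ 2 * (1 - a)⁻¹ + |L| * |t| := by
            nlinarith [hM (x + t), hM x]
      have h2 : 2 * (1 - a)⁻¹ ≤ 2 * (1 - a)⁻¹ / δ * |t| := by
        have h3 : 2 * (1 - a)⁻¹ / δ * δ = 2 * (1 - a)⁻¹ := div_mul_cancel₀ _ (ne_of_gt hδ0)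
        nlinarith [div_pos (by positivity : (0:ℝ) < 2 * (1 - a)⁻¹) hδ0]
      rw [hC_def]
      nlinarith [abs_nonneg t]
  have hBlim : Tendsto (fun m : ℕ => (b:ℝ) ^ m) atTop atTop :=
    tendsto_pow_atTop_atTop_of_one_lt hBgt1
  have hlim : ∀ s : ℝ, Tendsto (fun m : ℕ => (b:ℝ) ^ m * |r (s / (b:ℝ) ^ m)|) atTop (nhds 0) := by
    intro s
    by_cases hs : s = 0
    · subst hs
      have : (fun m : ℕ => (b:ℝ) ^ m * |r (0 / (b:ℝ) ^ m)|) = fun _ => 0 := by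
        funext m; simp [hr0]
      rw [this]
      exact tendsto_const_nhds
    · have h1 : Tendsto (fun t : ℝ => r t / t) (nhds 0) (nhds 0) :=
        (Asymptotics.isLittleO_iff_tendsto (fun t ht => by rw [ht]; exact hr0)).mp hlo
      have h2 : Tendsto (fun m : ℕ => s / (b:ℝ) ^ m) atTop (nhds 0) :=
        Tendsto.div_atTop tendsto_const_nhds hBlim
      have h3 : Tendsto (fun m : ℕ => r (s / (b:ℝ) ^ m) / (s / (b:ℝ) ^ m)) atTop (nhds 0) :=
        h1.comp h2
      have h4 : Tendsto (fun m : ℕ => |r (s / (b:ℝ) ^ m) / (s / (b:ℝ) ^ m)| * |s|) atTop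
          (nhds (|(0:ℝ)| * |s|)) := (h3.abs).mul_const _
      simp only [abs_zero, zero_mul] at h4
      refine h4.congr fun m => ?_
      have hBne : ((b:ℝ) ^ m) ≠ 0 := ne_of_gt (hBm m)
      have hsne : |s| ≠ 0 := abs_ne_zero.mpr hs
      rw [abs_div, show |s / (b:ℝ) ^ m| = |s| / (b:ℝ) ^ m from by
        rw [abs_div, abs_of_pos (hBm m)]]
      field_simp
  -- the kernel
  set E : ℝ → ℂ := fun s => Complex.exp ((-π * s : ℝ) * Complex.I) with hE_def
  have hEnorm : ∀ s, ‖E s‖ = 1 := fun s => Complex.norm_exp_ofReal_mul_I _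
  have hcontE : Continuous E := by
    rw [hE_def]
    exact Complex.continuous_exp.comp
      ((Complex.continuous_ofReal.comp (continuous_const.mul continuous_id)).mul continuous_const)
  have int1 : ∀ m : ℕ, Integrable (fun s : ℝ =>
      ((f (x + s / (b:ℝ) ^ m) : ℝ) : ℂ) * (E s * WNDaux.phi s)) := by
    intro m
    have h : Integrable (fun s : ℝ =>
        (((f (x + s / (b:ℝ) ^ m) : ℝ) : ℂ) * E s) * WNDaux.phi s) := by
      refine WNDaux.phi.integrable.bdd_mul (c := (1 - a)⁻¹) ?_ (Filter.Eventually.of_forall fun s => ?_)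
      · exact ((Complex.continuous_ofReal.comp
          (hfc.comp (continuous_const.add (continuous_id.div_const _)))).mul
            hcontE).aestronglyMeasurable
      · rw [norm_mul, hEnorm, mul_one, Complex.norm_real, Real.norm_eq_abs]
        exact hM _
    exact h.congr (Filter.Eventually.of_forall fun s => by ring)
  have int2 : Integrable (fun s : ℝ => E s * WNDaux.phi s) := WNDaux.integrable_exp_mul (-π)
  have int3 : Integrable (fun s : ℝ => (s : ℂ) * (E s * WNDaux.phi s)) := by
    have h : Integrable (fun s : ℝ => E s * (s • WNDaux.phi s)) :=
      WNDaux.integrable_smul_phi.bdd_mul hcontE.aestronglyMeasurable (Filter.Eventually.of_forall fun s => (hEnorm s).le)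
    refine h.congr (Filter.Eventually.of_forall fun s => ?_)
    simp only [Complex.real_smul]
    ring
  -- main estimate for each m
  have hIm : ∀ m : ℕ, (a ^ m / 2 : ℝ) ≤ ∫ s : ℝ, |r (s / (b:ℝ) ^ m)| * ‖WNDaux.phi s‖ := by
    intro m
    have hsplit : ∀ s : ℝ, ((r (s / (b:ℝ) ^ m) : ℝ) : ℂ) * (E s * WNDaux.phi s)
        = ((f (x + s / (b:ℝ) ^ m) : ℝ) : ℂ) * (E s * WNDaux.phi s)
          - ((f x : ℝ) : ℂ) * (E s * WNDaux.phi s)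
          - ((L / (b:ℝ) ^ m : ℝ) : ℂ) * ((s : ℂ) * (E s * WNDaux.phi s)) := by
      intro s
      rw [hr_def]
      push_cast
      have hBne : ((b:ℝ) ^ m : ℂ) ≠ 0 := by
        exact_mod_cast ne_of_gt (hBm m)
      field_simp
    have hval : ∫ s : ℝ, ((r (s / (b:ℝ) ^ m) : ℝ) : ℂ) * (E s * WNDaux.phi s)
        = ((a ^ m : ℝ) : ℂ) / 2 * Complex.exp (((b:ℝ) ^ m * π * x : ℝ) * Complex.I) := by
      rw [MeasureTheory.integral_congr_ae (Filter.Eventually.of_forall hsplit)]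
      have hint2 : Integrable (fun s : ℝ => ((f x : ℝ) : ℂ) * (E s * WNDaux.phi s)) :=
        int2.const_mul _
      have hint3 : Integrable (fun s : ℝ =>
          ((L / (b:ℝ) ^ m : ℝ) : ℂ) * ((s : ℂ) * (E s * WNDaux.phi s))) := int3.const_mul _
      have hint12 : Integrable (fun s : ℝ =>
          ((f (x + s / (b:ℝ) ^ m) : ℝ) : ℂ) * (E s * WNDaux.phi s)
            - ((f x : ℝ) : ℂ) * (E s * WNDaux.phi s)) := (int1 m).sub hint2
      rw [MeasureTheory.integral_sub hint12 hint3, MeasureTheory.integral_sub (int1 m) hint2]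
      have hA : ∫ s : ℝ, ((f (x + s / (b:ℝ) ^ m) : ℝ) : ℂ) * (E s * WNDaux.phi s)
          = ((a ^ m : ℝ) : ℂ) / 2 * Complex.exp (((b:ℝ) ^ m * π * x : ℝ) * Complex.I) := by
        have h := WNDaux.sumEval ha0 ha1 (b:ℝ) hB x m
        simp only [hf_def, weierstrassFun, hE_def]
        exact h
      have hBv : ∫ s : ℝ, ((f x : ℝ) : ℂ) * (E s * WNDaux.phi s) = 0 := by
        rw [MeasureTheory.integral_const_mul]
        have hk : ∫ s : ℝ, E s * WNDaux.phi s = WNDaux.psi ((-π) / (2 * π)) :=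
          WNDaux.key (-π)
        rw [hk, WNDaux.psi_supp _ (by
          rw [abs_div, abs_of_pos (by positivity : (0:ℝ) < 2 * π), abs_neg,
            abs_of_pos Real.pi_pos, le_div_iff₀ (by positivity)]
          nlinarith [Real.pi_pos]), mul_zero]
      have hCv : ∫ s : ℝ, ((L / (b:ℝ) ^ m : ℝ) : ℂ) * ((s : ℂ) * (E s * WNDaux.phi s)) = 0 := by
        rw [MeasureTheory.integral_const_mul]
        have hk : ∫ s : ℝ, (s : ℂ) * (E s * WNDaux.phi s) = 0 := by
          rw [← WNDaux.keyD]
          congr 1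
          ext s
          rw [hE_def]
          ring
        rw [hk, mul_zero]
      rw [hA, hBv, hCv]
      ring
    have h1 : ‖((a ^ m : ℝ) : ℂ) / 2 * Complex.exp (((b:ℝ) ^ m * π * x : ℝ) * Complex.I)‖
        = a ^ m / 2 := by
      rw [norm_mul, Complex.norm_exp_ofReal_mul_I, mul_one, norm_div, Complex.norm_real,
        Real.norm_eq_abs, _root_.abs_pow, abs_of_pos ha0]
      norm_num
    calc (a ^ m / 2 : ℝ)
        = ‖∫ s : ℝ, ((r (s / (b:ℝ) ^ m) : ℝ) : ℂ) * (E s * WNDaux.phi s)‖ := by rw [hval, h1]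
    _ ≤ ∫ s : ℝ, ‖((r (s / (b:ℝ) ^ m) : ℝ) : ℂ) * (E s * WNDaux.phi s)‖ :=
        norm_integral_le_integral_norm _
    _ = ∫ s : ℝ, |r (s / (b:ℝ) ^ m)| * ‖WNDaux.phi s‖ := by
        congr 1
        ext s
        rw [norm_mul, norm_mul, hEnorm, one_mul, Complex.norm_real, Real.norm_eq_abs]
  -- continuity of r
  have hrc : Continuous r := by
    rw [hr_def]
    exact ((hfc.comp (continuous_const.add continuous_id)).sub continuous_const).sub
      (continuous_id.mul continuous_const)
  have hbound_int : Integrable (fun s : ℝ => C * (‖s‖ * ‖WNDaux.phi s‖)) := by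
    have := (WNDaux.phi.integrable_pow_mul (μ := volume) 1).const_mul C
    refine this.congr (Filter.Eventually.of_forall fun s => ?_)
    simp
  have hG : Tendsto (fun m : ℕ => ∫ s : ℝ, (b:ℝ) ^ m * |r (s / (b:ℝ) ^ m)| * ‖WNDaux.phi s‖)
      atTop (nhds 0) := by
    have h0 : (0 : ℝ) = ∫ _ : ℝ, (0:ℝ) := by simp
    rw [h0]
    apply MeasureTheory.tendsto_integral_of_dominated_convergence
      (bound := fun s => C * (‖s‖ * ‖WNDaux.phi s‖))
    · intro m
      exact ((continuous_const.mul (hrc.comp (continuous_id.div_const _)).abs).mul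
        WNDaux.phi.continuous.norm).aestronglyMeasurable
    · exact hbound_int
    · intro m
      filter_upwards with s
      have hnn : (0:ℝ) ≤ (b:ℝ) ^ m * |r (s / (b:ℝ) ^ m)| * ‖WNDaux.phi s‖ :=
        mul_nonneg (mul_nonneg (le_of_lt (hBm m)) (abs_nonneg _)) (norm_nonneg _)
      rw [Real.norm_eq_abs, _root_.abs_of_nonneg hnn]
      have hb1 : (b:ℝ) ^ m * |r (s / (b:ℝ) ^ m)| ≤ C * |s| := by
        have := hC (s / (b:ℝ) ^ m)
        have habs2 : |s / (b:ℝ) ^ m| = |s| / (b:ℝ) ^ m := by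
          rw [abs_div, abs_of_pos (hBm m)]
        rw [habs2] at this
        have h3 := mul_le_mul_of_nonneg_left this (le_of_lt (hBm m))
        calc (b:ℝ) ^ m * |r (s / (b:ℝ) ^ m)| ≤ (b:ℝ) ^ m * (C * (|s| / (b:ℝ) ^ m)) := h3
        _ = C * |s| := by field_simp
      calc (b:ℝ) ^ m * |r (s / (b:ℝ) ^ m)| * ‖WNDaux.phi s‖
          ≤ C * |s| * ‖WNDaux.phi s‖ := by
            exact mul_le_mul_of_nonneg_right hb1 (norm_nonneg _)
      _ = C * (‖s‖ * ‖WNDaux.phi s‖) := by rw [Real.norm_eq_abs]; ring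
    · filter_upwards with s
      have := (hlim s).mul_const ‖WNDaux.phi s‖
      rw [zero_mul] at this
      exact this
  have hhalf : ∀ m : ℕ, (1/2 : ℝ) ≤ ∫ s : ℝ, (b:ℝ) ^ m * |r (s / (b:ℝ) ^ m)| * ‖WNDaux.phi s‖ := by
    intro m
    have h1 : (1:ℝ) ≤ (a * (b:ℝ)) ^ m := one_le_pow₀ hab
    have h3 := mul_le_mul_of_nonneg_left (hIm m) (le_of_lt (hBm m))
    rw [← MeasureTheory.integral_const_mul] at h3
    calc (1/2 : ℝ) ≤ (a * (b:ℝ)) ^ m / 2 := by linarith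
    _ = (b:ℝ) ^ m * (a ^ m / 2) := by rw [mul_pow]; ring
    _ ≤ ∫ s : ℝ, (b:ℝ) ^ m * (|r (s / (b:ℝ) ^ m)| * ‖WNDaux.phi s‖) := h3
    _ = ∫ s : ℝ, (b:ℝ) ^ m * |r (s / (b:ℝ) ^ m)| * ‖WNDaux.phi s‖ := by
        congr 1
        ext s
        ring
  have hev := hG.eventually_lt_const (by norm_num : (0:ℝ) < 1/2)
  obtain ⟨m, hm⟩ := hev.exists
  linarith [hhalf m]
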